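/- (Performance guarantee of RoKDeePC) Let Ȳ ∈ ℝ^{pN×H}, K̄ ∈ ℝ^{H×H} symmetric PSD, γ > 0, Q ⪰ 0, r ∈ ℝ^{pN}, k̄ ∈ ℝ^H, and let y_prd = Ȳ(K̄+γI)^{-1}k̄. Suppose the realized output y_sys satisfies ‖y_sys − y_prd‖_Q ≤ β_e, and λ_k ≥ 0 satisfies λ_k² I ⪰ (K̄+γI)^{-1}ȲᵀQȲ(K̄+γI)^{-1}. Then for every g ∈ ℝ^H and constant c_u ∈ ℝ: c_u + ‖Ȳg − r‖_Q + λ_k‖(K̄+γI)g − k̄‖ ≥ c_u + ‖y_sys − r‖_Q − β_e. In particular, the realized cost c_u + ‖y_sys − r‖_Q is at most the optimization cost plus β_e. -/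

import Mathlib

open Matrix BigOperators

noncomputable def vnorm {n : ℕ} (x : Fin n → ℝ) : ℝ := Real.sqrt (∑ i, x i ^ 2)

noncomputable def qnorm {n : ℕ} (Q : Matrix (Fin n) (Fin n) ℝ) (v : Fin n → ℝ) : ℝ :=
  Real.sqrt (v ⬝ᵥ Q.mulVec v)

lemma vnorm_eq_norm {n : ℕ} (x : Fin n → ℝ) :
    vnorm x = ‖(WithLp.equiv 2 (Fin n → ℝ)).symm x‖ := by
  rw [EuclideanSpace.norm_eq]
  simp [vnorm, sq_abs]

lemma vnorm_nonneg {n : ℕ} (x : Fin n → ℝ) : 0 ≤ vnorm x := Real.sqrt_nonneg _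

lemma vnorm_add_le {n : ℕ} (a b : Fin n → ℝ) : vnorm (a + b) ≤ vnorm a + vnorm b := by
  simp only [vnorm_eq_norm]
  exact norm_add_le _ _

lemma vnorm_neg {n : ℕ} (a : Fin n → ℝ) : vnorm (-a) = vnorm a := by
  simp [vnorm, neg_sq]

lemma vnorm_sq {n : ℕ} (a : Fin n → ℝ) : vnorm a ^ 2 = a ⬝ᵥ a := by
  rw [vnorm, Real.sq_sqrt]
  · simp [dotProduct, sq]
  · positivity

open scoped MatrixOrder in
lemma qnorm_eq_vnorm {n : ℕ} {Q : Matrix (Fin n) (Fin n) ℝ} (hQ : Q.PosSemidef)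
    (v : Fin n → ℝ) : qnorm Q v = vnorm ((CFC.sqrt Q).mulVec v) := by
  have hs : CFC.sqrt Q * CFC.sqrt Q = Q := CFC.sqrt_mul_sqrt_self Q hQ.nonneg
  have hsym : (CFC.sqrt Q)ᵀ = CFC.sqrt Q := by
    have h := (CFC.sqrt_nonneg Q).posSemidef.isHermitian
    simpa [Matrix.IsHermitian, Matrix.conjTranspose_eq_transpose_of_trivial] using h
  rw [qnorm, vnorm]
  congr 1
  have h1 : Q.mulVec v = (CFC.sqrt Q).mulVec ((CFC.sqrt Q).mulVec v) := by
    rw [mulVec_mulVec, hs]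
  rw [h1, dotProduct_mulVec, ← Matrix.vecMul_transpose, hsym]
  simp [dotProduct, sq]

lemma qnorm_triangle {n : ℕ} {Q : Matrix (Fin n) (Fin n) ℝ} (hQ : Q.PosSemidef)
    (a b : Fin n → ℝ) : qnorm Q (a + b) ≤ qnorm Q a + qnorm Q b := by
  simp only [qnorm_eq_vnorm hQ, mulVec_add]
  exact vnorm_add_le _ _

lemma qnorm_nonneg {n : ℕ} {Q : Matrix (Fin n) (Fin n) ℝ} (hQ : Q.PosSemidef)
    (a : Fin n → ℝ) : 0 ≤ qnorm Q a := Real.sqrt_nonneg _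

/-- Performance guarantee of RoKDeePC: the realized cost is bounded by the optimization
cost plus the prediction error bound β_e. -/
theorem stmt8 {p H : ℕ} (Yb : Matrix (Fin p) (Fin H) ℝ) (Kb : Matrix (Fin H) (Fin H) ℝ)
    (hKb : Kb.PosSemidef) (γ : ℝ) (hγ : 0 < γ)
    (Q : Matrix (Fin p) (Fin p) ℝ) (hQ : Q.PosSemidef)
    (r : Fin p → ℝ) (kb : Fin H → ℝ) (ysys : Fin p → ℝ) (βe lk : ℝ) (hlk : 0 ≤ lk)
    (herr : qnorm Q (ysys -
      Yb.mulVec ((Kb + γ • (1 : Matrix (Fin H) (Fin H) ℝ))⁻¹.mulVec kb)) ≤ βe)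
    (hdom : (lk ^ 2 • (1 : Matrix (Fin H) (Fin H) ℝ) -
      (Kb + γ • (1 : Matrix (Fin H) (Fin H) ℝ))⁻¹ * Yb.transpose * Q * Yb *
        (Kb + γ • (1 : Matrix (Fin H) (Fin H) ℝ))⁻¹).PosSemidef) :
    ∀ (g : Fin H → ℝ) (cu : ℝ),
      cu + qnorm Q (ysys - r) - βe ≤
      cu + qnorm Q (Yb.mulVec g - r) +
        lk * vnorm ((Kb + γ • (1 : Matrix (Fin H) (Fin H) ℝ)).mulVec g - kb) := by
  intro g cu
  set A : Matrix (Fin H) (Fin H) ℝ := Kb + γ • (1 : Matrix (Fin H) (Fin H) ℝ) with hAdef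
  -- A is positive definite
  have hγ1 : (γ • (1 : Matrix (Fin H) (Fin H) ℝ)).PosDef := by
    have hd : γ • (1 : Matrix (Fin H) (Fin H) ℝ) = Matrix.diagonal (fun _ => γ) := by
      ext i j
      rcases eq_or_ne i j with h | h <;>
        simp [h, Matrix.one_apply, Matrix.diagonal_apply_eq, Matrix.diagonal_apply_ne]
    rw [hd]
    exact Matrix.posDef_diagonal_iff.mpr fun _ => hγ
  have hApd : A.PosDef := Matrix.PosDef.posSemidef_add hKb hγ1
  have hdet : IsUnit A.det := hApd.det_pos.ne'.isUnit
  -- A and A⁻¹ are symmetric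
  have hAsym : Aᵀ = A := by
    have h := hApd.isHermitian
    simpa [Matrix.IsHermitian, Matrix.conjTranspose_eq_transpose_of_trivial] using h
  have hMsym : (A⁻¹)ᵀ = A⁻¹ := by rw [Matrix.transpose_nonsing_inv, hAsym]
  set M : Matrix (Fin H) (Fin H) ℝ := A⁻¹ with hMdef
  set ε : Fin H → ℝ := kb - A.mulVec g with hεdef
  set yprd : Fin p → ℝ := Yb.mulVec (M.mulVec kb) with hydef
  -- key identity : yprd - Yb g = Yb (M ε)
  have hkey : yprd - Yb.mulVec g = Yb.mulVec (M.mulVec ε) := by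
    have hMA : M.mulVec (A.mulVec g) = g := by
      rw [mulVec_mulVec, Matrix.nonsing_inv_mul A hdet, one_mulVec]
    rw [hεdef, mulVec_sub, hMA, mulVec_sub, hydef]
  -- bound : qnorm Q (Yb (M ε)) ≤ lk * vnorm ε
  have hbound : qnorm Q (Yb.mulVec (M.mulVec ε)) ≤ lk * vnorm ε := by
    have hquad : (Yb.mulVec (M.mulVec ε)) ⬝ᵥ Q.mulVec (Yb.mulVec (M.mulVec ε)) =
        ε ⬝ᵥ (M * Yb.transpose * Q * Yb * M).mulVec ε := by
      have hB : M * Yb.transpose * Q * Yb * M = (Yb * M)ᵀ * Q * (Yb * M) := by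
        rw [Matrix.transpose_mul, hMsym]
        simp [Matrix.mul_assoc]
      have h1 : ((Yb * M)ᵀ * Q * (Yb * M)).mulVec ε =
          (Yb * M)ᵀ.mulVec (Q.mulVec ((Yb * M).mulVec ε)) := by
        rw [mulVec_mulVec, mulVec_mulVec, Matrix.mul_assoc]
      have h2 : ε ⬝ᵥ (M * Yb.transpose * Q * Yb * M).mulVec ε =
          ((Yb * M).mulVec ε) ⬝ᵥ Q.mulVec ((Yb * M).mulVec ε) := by
        rw [hB, h1, dotProduct_mulVec, Matrix.vecMul_transpose]
      rw [mulVec_mulVec, h2]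
    have hdom' : ε ⬝ᵥ (M * Yb.transpose * Q * Yb * M).mulVec ε ≤ lk ^ 2 * (ε ⬝ᵥ ε) := by
      have h := hdom.dotProduct_mulVec_nonneg ε
      simp only [star_trivial, sub_mulVec, dotProduct_sub, Matrix.smul_mulVec,
        one_mulVec, dotProduct_smul, smul_eq_mul] at h
      linarith
    have hnn : 0 ≤ ε ⬝ᵥ ε := by
      have : ε ⬝ᵥ ε = ∑ i, ε i ^ 2 := by simp [dotProduct, sq]
      rw [this]; positivity
    rw [qnorm]
    calc Real.sqrt ((Yb.mulVec (M.mulVec ε)) ⬝ᵥ Q.mulVec (Yb.mulVec (M.mulVec ε)))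
        ≤ Real.sqrt (lk ^ 2 * (ε ⬝ᵥ ε)) := by
          apply Real.sqrt_le_sqrt
          rw [hquad]; exact hdom'
      _ = lk * vnorm ε := by
          rw [Real.sqrt_mul (by positivity), Real.sqrt_sq hlk, vnorm]
          congr 1
          simp [dotProduct, sq]
  -- triangle inequality chain
  have hsplit : ysys - r = (ysys - yprd) + ((yprd - Yb.mulVec g) + (Yb.mulVec g - r)) := by
    abel
  have ht1 : qnorm Q (ysys - r) ≤ qnorm Q (ysys - yprd) +
      (qnorm Q (yprd - Yb.mulVec g) + qnorm Q (Yb.mulVec g - r)) := by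
    rw [hsplit]
    calc qnorm Q ((ysys - yprd) + ((yprd - Yb.mulVec g) + (Yb.mulVec g - r)))
        ≤ qnorm Q (ysys - yprd) + qnorm Q ((yprd - Yb.mulVec g) + (Yb.mulVec g - r)) :=
          qnorm_triangle hQ _ _
      _ ≤ _ := by gcongr ?_ + ?_; · exact le_refl _
                  exact qnorm_triangle hQ _ _
  have hε' : vnorm (A.mulVec g - kb) = vnorm ε := by
    rw [hεdef, ← vnorm_neg (kb - A.mulVec g)]
    congr 1
    abel
  have h2 : qnorm Q (yprd - Yb.mulVec g) ≤ lk * vnorm ε := by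
    rw [hkey]; exact hbound
  have herr' : qnorm Q (ysys - yprd) ≤ βe := herr
  rw [hε']
  linarith
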